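/- For all integers m ≥ 0 and n ≥ 0, the number of elements of Q_2(m,n) is at most the number of elements of P_2(−m,n). -/

import Mathlib

noncomputable section

/-- The i-th largest part (1-indexed) of a partition, represented as a
multiset of parts; `0` if `i` exceeds the number of parts. -/
def partAt (mu : Multiset ℕ) (i : ℕ) : ℕ :=
  (mu.sort (· ≥ ·)).getD (i - 1) 0

/-- The smallest part of a partition, with the convention that the smallest
part of the empty partition is `+∞`. -/
def sMin (mu : Multiset ℕ) : ℕ∞ := (mu.map ((↑) : ℕ → ℕ∞)).inf

/-- Q₂(m,n): triples (j, α, β) with j ≥ 1, parts of α at most m+j, parts of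
β at most j, |α|+|β|+j(m+j) = n, β₁ = j, α₁ < m+j and ℓ(β) ≥ ℓ(α). -/
def Q2 (m n : ℕ) : Set (ℕ × Multiset ℕ × Multiset ℕ) :=
  {x | 1 ≤ x.1 ∧ (∀ a ∈ x.2.1, 0 < a) ∧ (∀ a ∈ x.2.2, 0 < a) ∧
       (∀ a ∈ x.2.1, a ≤ m + x.1) ∧ (∀ a ∈ x.2.2, a ≤ x.1) ∧
       x.2.1.sum + x.2.2.sum + x.1 * (m + x.1) = n ∧
       partAt x.2.2 1 = x.1 ∧ partAt x.2.1 1 < m + x.1 ∧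
       Multiset.card x.2.1 ≤ Multiset.card x.2.2}

/-- P₂(-m,n): triples (j', γ, δ) with j' ≥ 1, parts of γ at most m+j', parts
of δ at most j', |γ|+|δ|+j'(m+j') = n, ℓ(δ) ≤ ℓ(γ) and δ₁ = j'-1. -/
def P2 (m n : ℕ) : Set (ℕ × Multiset ℕ × Multiset ℕ) :=
  {x | 1 ≤ x.1 ∧ (∀ a ∈ x.2.1, 0 < a) ∧ (∀ a ∈ x.2.2, 0 < a) ∧
       (∀ a ∈ x.2.1, a ≤ m + x.1) ∧ (∀ a ∈ x.2.2, a ≤ x.1) ∧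
       x.2.1.sum + x.2.2.sum + x.1 * (m + x.1) = n ∧
       Multiset.card x.2.2 ≤ Multiset.card x.2.1 ∧
       (partAt x.2.2 1 : ℤ) = (x.1 : ℤ) - 1}

lemma partAt_zero : partAt 0 1 = 0 := by
  simp [partAt]

lemma partAt_one_mem (s : Multiset ℕ) (h : s ≠ 0) : partAt s 1 ∈ s := by
  have hs : ((s.sort (· ≥ ·)) : Multiset ℕ) = s := Multiset.sort_eq s _
  cases hL : s.sort (· ≥ ·) with
  | nil => rw [hL] at hs; simp at hs; exact absurd hs.symm h
  | cons c t =>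
    have hp : partAt s 1 = c := by rw [partAt, hL]; rfl
    rw [hp, ← hs, hL]
    simp

lemma le_partAt_one {s : Multiset ℕ} {a : ℕ} (h : a ∈ s) : a ≤ partAt s 1 := by
  have hs : ((s.sort (· ≥ ·)) : Multiset ℕ) = s := Multiset.sort_eq s _
  have hsort := Multiset.pairwise_sort s (· ≥ ·)
  cases hL : s.sort (· ≥ ·) with
  | nil => rw [hL] at hs; simp at hs; subst hs; simp at h
  | cons c t =>
    rw [hL] at hsort
    have ha : a ∈ c :: t := by rw [← hL]; rw [← hs] at h; exact_mod_cast h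
    have hp : partAt s 1 = c := by rw [partAt, hL]; rfl
    rw [hp]
    rcases List.mem_cons.mp ha with rfl | ha'
    · exact le_refl _
    · exact (List.pairwise_cons.mp hsort).1 a ha'

lemma card_le_sum {s : Multiset ℕ} (h : ∀ a ∈ s, 0 < a) : Multiset.card s ≤ s.sum := by
  induction s using Multiset.induction with
  | empty => simp
  | cons a t ih =>
    simp only [Multiset.card_cons, Multiset.sum_cons]
    have ha := h a (Multiset.mem_cons_self a t)
    have := ih (fun b hb => h b (Multiset.mem_cons_of_mem hb))
    omega

lemma sum_map_succ (s : Multiset ℕ) :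
    (s.map (fun b => b + 1)).sum = s.sum + Multiset.card s := by
  induction s using Multiset.induction with
  | empty => simp
  | cons a t ih => simp [ih]; ring

lemma sum_map_pred (s : Multiset ℕ) (h : ∀ b ∈ s, 1 ≤ b) :
    (s.map (fun b => b - 1)).sum + Multiset.card s = s.sum := by
  induction s using Multiset.induction with
  | empty => simp
  | cons a t ih =>
    simp only [Multiset.map_cons, Multiset.sum_cons, Multiset.card_cons]
    have ha := h a (Multiset.mem_cons_self a t)
    have := ih (fun b hb => h b (Multiset.mem_cons_of_mem hb))
    omega

/-- the injection -/
def Φ : ℕ × Multiset ℕ × Multiset ℕ → ℕ × Multiset ℕ × Multiset ℕ :=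
  fun x => (x.1,
    x.2.1.map (fun b => b + 1) +
      Multiset.replicate (Multiset.card x.2.2 - Multiset.card x.2.1) 1,
    (x.2.2.filter (fun b => 2 ≤ b)).map (fun b => b - 1))

lemma ones_filter (s : Multiset ℕ) (h : ∀ a ∈ s, 0 < a) :
    s.filter (fun b => ¬ 2 ≤ b) = Multiset.replicate
      (Multiset.card (s.filter (fun b => ¬ 2 ≤ b))) 1 := by
  apply Multiset.eq_replicate_card.2
  intro b hb
  have h1 := Multiset.of_mem_filter hb
  have h2 := h b (Multiset.mem_of_mem_filter hb)
  omega

theorem Q2_card_le_P2_card (m n : ℕ) : Nat.card (Q2 m n) ≤ Nat.card (P2 m n) := by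
  -- finiteness of P2
  classical
  set T : Multiset ℕ := n • Multiset.range (n + 1) with hTdef
  have hT : ∀ s : Multiset ℕ, (∀ a ∈ s, 0 < a) → s.sum ≤ n → s ≤ T := by
    intro s hpos hsum
    refine Multiset.le_iff_count.2 fun a => ?_
    by_cases ha : a ∈ s
    · have ha1 : a ≤ s.sum := Multiset.single_le_sum (fun x _ => Nat.zero_le x) a ha
      have ha2 : a < n + 1 := by omega
      have hcount : Multiset.count a T = n := by
        rw [hTdef, Multiset.count_nsmul, Multiset.count_eq_one_of_mem
          (Multiset.nodup_range _) (Multiset.mem_range.2 ha2), mul_one]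
      have := (Multiset.count_le_card a s).trans ((card_le_sum hpos).trans hsum)
      omega
    · simp [Multiset.count_eq_zero_of_notMem ha]
  have hfin : (P2 m n).Finite := by
    apply Set.Finite.subset
      (((Finset.range (n + 1)) ×ˢ (T.powerset.toFinset ×ˢ T.powerset.toFinset)).finite_toSet)
    rintro ⟨j, γ, δ⟩ hx
    obtain ⟨hj, hγpos, hδpos, -, -, hsum, -, -⟩ := hx
    have hsum' : γ.sum + δ.sum + j * (m + j) = n := hsum
    simp only [Finset.coe_product, Set.mem_prod, Finset.mem_coe, Finset.mem_range,
      Multiset.mem_toFinset, Multiset.mem_powerset]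
    refine ⟨?_, hT γ hγpos (by omega), hT δ hδpos (by omega)⟩
    have h5 : j ≤ j * (m + j) := Nat.le_mul_of_pos_right j (by omega)
    omega
  -- the injection
  have hmaps : Set.MapsTo Φ (Q2 m n) (P2 m n) := by
    rintro ⟨j, α, β⟩ hx
    obtain ⟨hj, hαpos, hβpos, hαle, hβle, hsum, hβ1, hα1, hcard⟩ := hx
    have hsum' : α.sum + β.sum + j * (m + j) = n := hsum
    have hβ1' : partAt β 1 = j := hβ1
    have hα1' : partAt α 1 < m + j := hα1
    have hcard2 : Multiset.card α ≤ Multiset.card β := hcard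
    have hαle' : ∀ a ∈ α, a ≤ m + j := hαle
    have hβle' : ∀ a ∈ β, a ≤ j := hβle
    clear hsum hβ1 hα1 hcard hαle hβle
    show (j, α.map (fun b => b + 1) +
      Multiset.replicate (Multiset.card β - Multiset.card α) 1,
      (β.filter (fun b => 2 ≤ b)).map (fun b => b - 1)) ∈ P2 m n
    simp only [P2, Set.mem_setOf_eq]
    have hFcard : Multiset.card (β.filter (fun b => 2 ≤ b)) ≤ Multiset.card β :=
      Multiset.card_le_card (Multiset.filter_le _ _)
    have hsplit := Multiset.filter_add_not (fun b => 2 ≤ b) β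
    have hones := ones_filter β hβpos
    have hsumδ : ((β.filter (fun b => 2 ≤ b)).map (fun b => b - 1)).sum
        + Multiset.card β = β.sum := by
      have h1 := sum_map_pred (β.filter (fun b => 2 ≤ b))
        (fun b hb => by have := Multiset.of_mem_filter hb; omega)
      have h2 : (β.filter (fun b => 2 ≤ b)).sum
          + (β.filter (fun b => ¬ 2 ≤ b)).sum = β.sum := by
        rw [← Multiset.sum_add, hsplit]
      have h3 : (β.filter (fun b => ¬ 2 ≤ b)).sum
          = Multiset.card (β.filter (fun b => ¬ 2 ≤ b)) := by
        conv_lhs => rw [hones]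
        simp [Multiset.sum_replicate]
      have h4 : Multiset.card (β.filter (fun b => 2 ≤ b))
          + Multiset.card (β.filter (fun b => ¬ 2 ≤ b)) = Multiset.card β := by
        rw [← Multiset.card_add, hsplit]
      omega
    refine ⟨hj, ?_, ?_, ?_, ?_, ?_, ?_, ?_⟩
    · -- γ positive
      intro a ha
      rcases Multiset.mem_add.mp ha with ha | ha
      · obtain ⟨b, -, rfl⟩ := Multiset.mem_map.mp ha; omega
      · rw [Multiset.eq_of_mem_replicate ha]; omega
    · -- δ positive
      intro a ha
      obtain ⟨b, hb, rfl⟩ := Multiset.mem_map.mp ha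
      have := Multiset.of_mem_filter hb
      omega
    · -- γ parts ≤ m + j
      intro a ha
      rcases Multiset.mem_add.mp ha with ha | ha
      · obtain ⟨b, hb, rfl⟩ := Multiset.mem_map.mp ha
        have h6 := le_partAt_one hb
        omega
      · rw [Multiset.eq_of_mem_replicate ha]; omega
    · -- δ parts ≤ j
      intro a ha
      obtain ⟨b, hb, rfl⟩ := Multiset.mem_map.mp ha
      have := hβle' b (Multiset.mem_of_mem_filter hb)
      omega
    · -- sum
      simp only [Multiset.sum_add, Multiset.sum_replicate, smul_eq_mul, mul_one,
        sum_map_succ]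
      omega
    · -- card δ ≤ card γ
      simp only [Multiset.card_add, Multiset.card_map, Multiset.card_replicate]
      omega
    · -- partAt δ 1 = j - 1
      by_cases h2 : 2 ≤ j
      · have hβ0 : β ≠ 0 := by
          intro h; rw [h, partAt_zero] at hβ1'; omega
        have hjβ : j ∈ β := hβ1' ▸ partAt_one_mem β hβ0
        have hmem : j - 1 ∈ (β.filter (fun b => 2 ≤ b)).map (fun b => b - 1) :=
          Multiset.mem_map.mpr ⟨j, Multiset.mem_filter.mpr ⟨hjβ, h2⟩, rfl⟩
        have hδ0 : (β.filter (fun b => 2 ≤ b)).map (fun b => b - 1) ≠ 0 := by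
          intro h; rw [h] at hmem; simp at hmem
        have hle1 := le_partAt_one hmem
        have hle2 : partAt ((β.filter (fun b => 2 ≤ b)).map (fun b => b - 1)) 1 ≤ j - 1 := by
          obtain ⟨b, hb, hb2⟩ := Multiset.mem_map.mp (partAt_one_mem _ hδ0)
          have := hβle' b (Multiset.mem_of_mem_filter hb)
          omega
        omega
      · have : β.filter (fun b => 2 ≤ b) = 0 := by
          rw [Multiset.filter_eq_nil]
          intro a ha
          have := hβle' a ha
          omega
        rw [this, Multiset.map_zero, partAt_zero]
        omega
  have hinj : Set.InjOn Φ (Q2 m n) := by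
    rintro ⟨j, α, β⟩ hx ⟨j', α', β'⟩ hy hxy
    obtain ⟨-, hαpos, hβpos, -, -, -, -, -, hcard⟩ := hx
    obtain ⟨-, hαpos', hβpos', -, -, -, -, -, hcard'⟩ := hy
    have hcard2 : Multiset.card α ≤ Multiset.card β := hcard
    have hcard2' : Multiset.card α' ≤ Multiset.card β' := hcard'
    simp only [Φ, Prod.mk.injEq] at hxy
    obtain ⟨hjeq, hγeq, hδeq⟩ := hxy
    subst hjeq
    -- recover the filters of β from δ
    have hrecF : ∀ s : Multiset ℕ,
        ((s.filter (fun b => 2 ≤ b)).map (fun b => b - 1)).map (fun b => b + 1)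
          = s.filter (fun b => 2 ≤ b) := by
      intro s
      rw [Multiset.map_map]
      rw [Multiset.map_congr rfl (fun b hb => ?_), Multiset.map_id']
      have := Multiset.of_mem_filter hb
      simp only [Function.comp_apply]
      omega
    have hFeq : β.filter (fun b => 2 ≤ b) = β'.filter (fun b => 2 ≤ b) := by
      rw [← hrecF β, ← hrecF β', hδeq]
    -- recover α from γ
    have hrecα : ∀ (s : Multiset ℕ) (k : ℕ), (∀ a ∈ s, 0 < a) →
        ((s.map (fun b => b + 1) + Multiset.replicate k 1).filter
          (fun b => 2 ≤ b)).map (fun b => b - 1) = s := by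
      intro s k hpos
      rw [Multiset.filter_add]
      have h1 : (s.map (fun b => b + 1)).filter (fun b => 2 ≤ b) = s.map (fun b => b + 1) := by
        rw [Multiset.filter_eq_self]
        intro a ha
        obtain ⟨b, hb, rfl⟩ := Multiset.mem_map.mp ha
        have := hpos b hb
        omega
      have h2 : (Multiset.replicate k 1 : Multiset ℕ).filter (fun b => 2 ≤ b) = 0 := by
        rw [Multiset.filter_eq_nil]
        intro a ha
        rw [Multiset.eq_of_mem_replicate ha]
        omega
      rw [h1, h2, add_zero, Multiset.map_map]
      rw [Multiset.map_congr rfl (fun b _ => ?_), Multiset.map_id']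
      simp
    have hαeq : α = α' := by
      rw [← hrecα α (Multiset.card β - Multiset.card α) hαpos,
          ← hrecα α' (Multiset.card β' - Multiset.card α') hαpos', hγeq]
    -- card β = card β'
    have hcγ : Multiset.card β = Multiset.card β' := by
      have h1 := congrArg Multiset.card hγeq
      simp only [Multiset.card_add, Multiset.card_map, Multiset.card_replicate] at h1
      omega
    -- recover β
    have hrecβ : ∀ s : Multiset ℕ, (∀ a ∈ s, 0 < a) →
        s.filter (fun b => 2 ≤ b) + Multiset.replicate
          (Multiset.card s - Multiset.card (s.filter (fun b => 2 ≤ b))) 1 = s := by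
      intro s hpos
      have hsplit := Multiset.filter_add_not (fun b => 2 ≤ b) s
      have hones := ones_filter s hpos
      have h4 : Multiset.card (s.filter (fun b => 2 ≤ b))
          + Multiset.card (s.filter (fun b => ¬ 2 ≤ b)) = Multiset.card s := by
        rw [← Multiset.card_add, hsplit]
      have h5 : Multiset.card s - Multiset.card (s.filter (fun b => 2 ≤ b))
          = Multiset.card (s.filter (fun b => ¬ 2 ≤ b)) := by omega
      rw [h5, ← hones]
      exact hsplit
    have hβeq : β = β' := by
      rw [← hrecβ β hβpos, ← hrecβ β' hβpos', hFeq, hcγ]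
    rw [hαeq, hβeq]
  calc Nat.card (Q2 m n) = (Q2 m n).ncard := (Nat.card_coe_set_eq _)
    _ ≤ (P2 m n).ncard := Set.ncard_le_ncard_of_injOn Φ (fun a ha => hmaps ha) hinj hfin
    _ = Nat.card (P2 m n) := (Nat.card_coe_set_eq _).symm
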